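/- Let φ : S → ℝ be any bounded function (potential) on the state space of an MDP with discount γ ∈ (0,1), and define the shaped reward r'(s,a,s') = r(s,a,s') + γ·φ(s') - φ(s). Then for any policy π and any state-action pair (s,a), the shaped action-value function satisfies Q'^π(s,a) = Q^π(s,a) - φ(s); in particular, argmax_a Q'^π(s,a) = argmax_a Q^π(s,a) for every state s, so potential-based shaping preserves optimal policies. -/
import Mathlib


theorem potential_shaping_preserves_values {S A : Type*} [Fintype S] [Fintype A]
    (γ : ℝ) (hγ0 : 0 < γ) (hγ1 : γ < 1)
    (P : S → A → S → ℝ) (hP0 : ∀ s a s', 0 ≤ P s a s')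
    (hP1 : ∀ s a, ∑ s', P s a s' = 1)
    (r : S → A → S → ℝ) (φ : S → ℝ) (π : S → A)
    (Q Q' : S → A → ℝ)
    (hQ : ∀ s a, Q s a = ∑ s', P s a s' * (r s a s' + γ * Q s' (π s')))
    (hQ' : ∀ s a, Q' s a =
      ∑ s', P s a s' * ((r s a s' + γ * φ s' - φ s) + γ * Q' s' (π s'))) :
    (∀ s a, Q' s a = Q s a - φ s) ∧
    (∀ s a, (∀ b, Q' s b ≤ Q' s a) ↔ (∀ b, Q s b ≤ Q s a)) := by
  have key : ∀ s a, Q' s a = Q s a - φ s := by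
    intro s a
    -- D measures the deviation
    set D : S → ℝ := fun t => Q' t (π t) - Q t (π t) + φ t with hD
    have hrec : ∀ s a, Q' s a - Q s a + φ s = γ * ∑ s', P s a s' * D s' := by
      intro s a
      have h1 := hQ s a
      have h2 := hQ' s a
      have hφ : ∑ s', P s a s' * φ s = φ s := by
        rw [← Finset.sum_mul, hP1, one_mul]
      calc Q' s a - Q s a + φ s
          = (∑ s', P s a s' * ((r s a s' + γ * φ s' - φ s) + γ * Q' s' (π s')))
            - (∑ s', P s a s' * (r s a s' + γ * Q s' (π s')))
            + ∑ s', P s a s' * φ s := by rw [← h1, ← h2, hφ]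
        _ = ∑ s', (P s a s' * ((r s a s' + γ * φ s' - φ s) + γ * Q' s' (π s'))
              - P s a s' * (r s a s' + γ * Q s' (π s'))
              + P s a s' * φ s) := by
            rw [Finset.sum_add_distrib, Finset.sum_sub_distrib]
        _ = ∑ s', γ * (P s a s' * D s') := by
            apply Finset.sum_congr rfl
            intro s' _
            simp only [hD]
            ring
        _ = γ * ∑ s', P s a s' * D s' := by rw [Finset.mul_sum]
    -- bound on D
    have hSne : Nonempty S := ⟨s⟩
    obtain ⟨t₀, -, hMmax⟩ := Finset.exists_max_image Finset.univ (fun t => |D t|)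
      (Finset.univ_nonempty)
    set M : ℝ := |D t₀| with hMdef
    have hMnn : 0 ≤ M := abs_nonneg _
    have hbound : ∀ t a', |Q' t a' - Q t a' + φ t| ≤ γ * |M| * 1 := by
      intro t a'
      rw [hrec t a', abs_mul, abs_of_pos hγ0]
      have : |∑ s', P t a' s' * D s'| ≤ |M| := by
        calc |∑ s', P t a' s' * D s'| ≤ ∑ s', |P t a' s' * D s'| :=
              Finset.abs_sum_le_sum_abs _ _
          _ ≤ ∑ s', P t a' s' * |M| := by
              apply Finset.sum_le_sum
              intro i _
              rw [abs_mul, abs_of_nonneg (hP0 t a' i)]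
              exact mul_le_mul_of_nonneg_left
                (le_trans (hMmax i (Finset.mem_univ i)) (le_abs_self M))
                (hP0 t a' i)
          _ = |M| := by rw [← Finset.sum_mul, hP1, one_mul]
      nlinarith [abs_nonneg M]
    have hMle : M ≤ γ * |M| := by
      have h := hbound t₀ (π t₀)
      rw [mul_one] at h
      calc M = |D t₀| := rfl
        _ = |Q' t₀ (π t₀) - Q t₀ (π t₀) + φ t₀| := rfl
        _ ≤ γ * |M| := h
    have hM0' : |M| = 0 := by
      rw [abs_of_nonneg hMnn] at *
      nlinarith
    have hDzero : ∀ t, D t = 0 := by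
      intro t
      have h2 : |D t| ≤ |M| := le_trans (hMmax t (Finset.mem_univ t)) (le_abs_self M)
      rw [hM0'] at h2
      have := abs_nonneg (D t)
      have : |D t| = 0 := le_antisymm h2 this
      exact abs_eq_zero.mp this
    have := hrec s a
    simp only [hDzero, mul_zero, Finset.sum_const_zero] at this
    linarith
  refine ⟨key, fun s a => ?_⟩
  constructor <;> intro h b <;> have := h b <;> rw [key s a, key s b] at * <;> linarith
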